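/- arXiv:1505.03232 — 4 statements merged into one kernel-verified Lean document; each statement's English description precedes it below -/
import Mathlib

section
/- Let 0 < R₁ < r, d ∈ ℝ, and (x,y) ∈ ℝ² with x² + y² = r². Define the symmetric matrix C by C₁₁ = ((r-R₁)/r)(x²/r²) + (1/(r(r-R₁)))(dx/r - y)², C₂₂ = ((r-R₁)/r)(y²/r²) + (1/(r(r-R₁)))(dy/r + x)², C₁₂ = ((r-R₁)/r)(xy/r²) + (1/(r(r-R₁)))(dx/r - y)(dy/r + x). Then C is symmetric positive definite, det C = 1, and C₁₁ + C₂₂ = (r - R₁)/r + (r² + d²)/(r(r - R₁)). -/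
/-- the cloaking-layer material matrix of the polygonal cloak is
symmetric positive definite with `det C = 1` and trace
`(r-R₁)/r + (r²+d²)/(r(r-R₁))`. -/
theorem stmt12 (R₁ r d x y : ℝ) (hR₁ : 0 < R₁) (hr : R₁ < r)
    (hxy : x ^ 2 + y ^ 2 = r ^ 2)
    (C : Matrix (Fin 2) (Fin 2) ℝ)
    (hC : C = Matrix.of
      !![(r - R₁) / r * (x ^ 2 / r ^ 2) + 1 / (r * (r - R₁)) * (d * x / r - y) ^ 2,
         (r - R₁) / r * (x * y / r ^ 2) +
           1 / (r * (r - R₁)) * ((d * x / r - y) * (d * y / r + x));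
         (r - R₁) / r * (x * y / r ^ 2) +
           1 / (r * (r - R₁)) * ((d * x / r - y) * (d * y / r + x)),
         (r - R₁) / r * (y ^ 2 / r ^ 2) + 1 / (r * (r - R₁)) * (d * y / r + x) ^ 2]) :
    C.IsSymm ∧ C.PosDef ∧ C.det = 1 ∧
    C 0 0 + C 1 1 = (r - R₁) / r + (r ^ 2 + d ^ 2) / (r * (r - R₁)) := by
  have hr0 : (0:ℝ) < r := hR₁.trans hr
  have hrR : (0:ℝ) < r - R₁ := by linarith
  have hrne : r ≠ 0 := ne_of_gt hr0
  have hrRne : r - R₁ ≠ 0 := ne_of_gt hrR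
  subst hC
  have hsymm : (Matrix.of
      !![(r - R₁) / r * (x ^ 2 / r ^ 2) + 1 / (r * (r - R₁)) * (d * x / r - y) ^ 2,
         (r - R₁) / r * (x * y / r ^ 2) +
           1 / (r * (r - R₁)) * ((d * x / r - y) * (d * y / r + x));
         (r - R₁) / r * (x * y / r ^ 2) +
           1 / (r * (r - R₁)) * ((d * x / r - y) * (d * y / r + x)),
         (r - R₁) / r * (y ^ 2 / r ^ 2) + 1 / (r * (r - R₁)) * (d * y / r + x) ^ 2]).IsSymm := by
    rw [Matrix.IsSymm, show ∀ M : Matrix (Fin 2) (Fin 2) ℝ, Matrix.of M = M from fun _ => rfl]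
    ext i j
    fin_cases i <;> fin_cases j <;> simp
  refine ⟨hsymm, Matrix.PosDef.of_dotProduct_mulVec_pos hsymm ?_, ?_, ?_⟩
  · intro v hv
    rw [show ∀ M : Matrix (Fin 2) (Fin 2) ℝ, Matrix.of M = M from fun _ => rfl]
    simp only [Matrix.mulVec, dotProduct, Fin.sum_univ_two, RCLike.re_to_real,
      Matrix.of_apply, Matrix.cons_val', Matrix.cons_val_zero, Matrix.cons_val_one,
      Matrix.head_cons, Matrix.empty_val', Matrix.cons_val_fin_one, Matrix.head_fin_const,
      Pi.star_apply, star_trivial]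
    set a := v 0 with ha
    set b := v 1 with hb
    set u := x * a + y * b with hu
    set w := (d * x / r - y) * a + (d * y / r + x) * b with hw
    have hQ : a * (((r - R₁) / r * (x ^ 2 / r ^ 2) + 1 / (r * (r - R₁)) * (d * x / r - y) ^ 2) * a +
        ((r - R₁) / r * (x * y / r ^ 2) +
          1 / (r * (r - R₁)) * ((d * x / r - y) * (d * y / r + x))) * b) +
        b * (((r - R₁) / r * (x * y / r ^ 2) +
          1 / (r * (r - R₁)) * ((d * x / r - y) * (d * y / r + x))) * a +
        ((r - R₁) / r * (y ^ 2 / r ^ 2) + 1 / (r * (r - R₁)) * (d * y / r + x) ^ 2) * b) =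
        (r - R₁) / r * (u / r) ^ 2 + 1 / (r * (r - R₁)) * w ^ 2 := by
      rw [hu, hw]; ring
    rw [hQ]
    have hα : 0 < (r - R₁) / r := div_pos hrR hr0
    have hβ : 0 < 1 / (r * (r - R₁)) := by positivity
    rcases eq_or_ne u 0 with hu0 | hu0
    · rcases eq_or_ne w 0 with hw0 | hw0
      · exfalso
        -- u = 0 and w = 0 force a = b = 0
        have hwr : d * u + r * (x * b - y * a) = w * r := by rw [hu, hw]; field_simp; ring
        have h2 : x * b - y * a = 0 := by
          have h3 : r * (x * b - y * a) = 0 := by rw [hu0, hw0] at hwr; linarith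
          exact (mul_eq_zero.mp h3).resolve_left hrne
        have ha0 : a = 0 := by
          have : r ^ 2 * a = x * u - y * (x * b - y * a) := by
            rw [hu, ← hxy]; ring
          rw [hu0, h2] at this
          have : r ^ 2 * a = 0 := by simpa using this
          have hr2 : (r:ℝ) ^ 2 ≠ 0 := pow_ne_zero 2 hrne
          exact (mul_eq_zero.mp this).resolve_left hr2
        have hb0 : b = 0 := by
          have : r ^ 2 * b = y * u + x * (x * b - y * a) := by
            rw [hu, ← hxy]; ring
          rw [hu0, h2] at this
          have : r ^ 2 * b = 0 := by simpa using this
          have hr2 : (r:ℝ) ^ 2 ≠ 0 := pow_ne_zero 2 hrne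
          exact (mul_eq_zero.mp this).resolve_left hr2
        apply hv
        funext i
        fin_cases i
        · exact ha0
        · exact hb0
      · have h1 : 0 ≤ (r - R₁) / r * (u / r) ^ 2 := by positivity
        have h2 : 0 < 1 / (r * (r - R₁)) * w ^ 2 := by positivity
        linarith
    · have h1 : 0 < (r - R₁) / r * (u / r) ^ 2 := by positivity
      have h2 : 0 ≤ 1 / (r * (r - R₁)) * w ^ 2 := by positivity
      linarith
  · rw [Matrix.det_fin_two, show ∀ M : Matrix (Fin 2) (Fin 2) ℝ, Matrix.of M = M from fun _ => rfl]
    simp only [Matrix.of_apply, Matrix.cons_val', Matrix.cons_val_zero, Matrix.cons_val_one,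
      Matrix.head_cons, Matrix.empty_val', Matrix.cons_val_fin_one, Matrix.head_fin_const]
    field_simp
    linear_combination (r ^ 2 * (r - R₁) ^ 2 * (x ^ 2 + y ^ 2 + r ^ 2)) * hxy
  · rw [show ∀ M : Matrix (Fin 2) (Fin 2) ℝ, Matrix.of M = M from fun _ => rfl]
    simp only [Matrix.of_apply, Matrix.cons_val', Matrix.cons_val_zero, Matrix.cons_val_one,
      Matrix.head_cons, Matrix.empty_val', Matrix.cons_val_fin_one, Matrix.head_fin_const]
    field_simp
    linear_combination ((r - R₁) ^ 2 + r ^ 2 + d ^ 2) * hxy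
end

section
/- Fix θ ∈ ℝ, R₁ > 0 and d ∈ ℝ, and for r > R₁ let C(r) be the 2×2 matrix with entries C₁₁ = ((r-R₁)/r)(x²/r²) + (1/(r(r-R₁)))(dx/r - y)², C₂₂ = ((r-R₁)/r)(y²/r²) + (1/(r(r-R₁)))(dy/r + x)², C₁₂ = ((r-R₁)/r)(xy/r²) + (1/(r(r-R₁)))(dx/r - y)(dy/r + x), where x = r cos θ, y = r sin θ. Then the matrix-valued limit lim_{r→R₁⁺} (r - R₁) C(r) exists and equals (1/R₁) q qᵀ, where q = (d cos θ - R₁ sin θ, d sin θ + R₁ cos θ). In particular lim_{r→R₁⁺} (r - R₁)(C₁₁(r) + C₂₂(r)) = (R₁² + d²)/R₁. -/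
set_option maxHeartbeats 1000000


open Matrix Filter

/-- along the ray of polar angle `θ`, the matrix-valued limit
`lim_{r→R₁⁺} (r - R₁) C(r)` exists and equals `(1/R₁) q qᵀ` with
`q = (d cos θ - R₁ sin θ, d sin θ + R₁ cos θ)`; in particular
`lim_{r→R₁⁺} (r - R₁)(C₁₁(r) + C₂₂(r)) = (R₁² + d²)/R₁`. -/
theorem stmt14 (θ R₁ d : ℝ) (hR₁ : 0 < R₁)
    (C : ℝ → Matrix (Fin 2) (Fin 2) ℝ)
    (hC : ∀ r ∈ Set.Ioi R₁, C r =
      let x := r * Real.cos θ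
      let y := r * Real.sin θ
      !![(r - R₁) / r * (x ^ 2 / r ^ 2) + 1 / (r * (r - R₁)) * (d * x / r - y) ^ 2,
         (r - R₁) / r * (x * y / r ^ 2) +
           1 / (r * (r - R₁)) * ((d * x / r - y) * (d * y / r + x));
         (r - R₁) / r * (x * y / r ^ 2) +
           1 / (r * (r - R₁)) * ((d * x / r - y) * (d * y / r + x)),
         (r - R₁) / r * (y ^ 2 / r ^ 2) + 1 / (r * (r - R₁)) * (d * y / r + x) ^ 2]) :
    Filter.Tendsto (fun r => (r - R₁) • C r) (nhdsWithin R₁ (Set.Ioi R₁))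
      (nhds ((1 / R₁) •
        !![(d * Real.cos θ - R₁ * Real.sin θ) ^ 2,
           (d * Real.cos θ - R₁ * Real.sin θ) * (d * Real.sin θ + R₁ * Real.cos θ);
           (d * Real.cos θ - R₁ * Real.sin θ) * (d * Real.sin θ + R₁ * Real.cos θ),
           (d * Real.sin θ + R₁ * Real.cos θ) ^ 2])) ∧
    Filter.Tendsto (fun r => (r - R₁) * (C r 0 0 + C r 1 1))
      (nhdsWithin R₁ (Set.Ioi R₁)) (nhds ((R₁ ^ 2 + d ^ 2) / R₁)) := by
  have hR₁' : R₁ ≠ 0 := ne_of_gt hR₁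
  set c := Real.cos θ with hc
  set s := Real.sin θ with hs
  -- generic limit lemma
  have key : ∀ (A b₁ b₂ e₁ e₂ : ℝ),
      Filter.Tendsto (fun r => (r - R₁) ^ 2 * A / r + (b₁ + e₁ * r) * (b₂ + e₂ * r) / r)
        (nhdsWithin R₁ (Set.Ioi R₁))
        (nhds ((1 / R₁) * ((b₁ + e₁ * R₁) * (b₂ + e₂ * R₁)))) := by
    intro A b₁ b₂ e₁ e₂
    have hcont : ContinuousAt
        (fun r => (r - R₁) ^ 2 * A / r + (b₁ + e₁ * r) * (b₂ + e₂ * r) / r) R₁ := by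
      apply ContinuousAt.add <;>
        exact ContinuousAt.div (by fun_prop) continuousAt_id hR₁'
    have := hcont.continuousWithinAt (s := Set.Ioi R₁)
    have h2 := this.tendsto
    simpa [one_div, div_eq_mul_inv, mul_comm] using h2
  have hentry : ∀ (b₁ b₂ e₁ e₂ A : ℝ),
      (∀ r ∈ Set.Ioi R₁, (r - R₁) * C r 0 0 =
        (r - R₁) ^ 2 * A / r + (b₁ + e₁ * r) * (b₂ + e₂ * r) / r) → True := fun _ _ _ _ _ _ => trivial
  -- per-entry tendsto, with congruence on Ioi
  have entry : ∀ (i j : Fin 2) (A b₁ b₂ e₁ e₂ : ℝ),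
      (∀ r ∈ Set.Ioi R₁, (r - R₁) * C r i j =
        (r - R₁) ^ 2 * A / r + (b₁ + e₁ * r) * (b₂ + e₂ * r) / r) →
      Filter.Tendsto (fun r => (r - R₁) * C r i j) (nhdsWithin R₁ (Set.Ioi R₁))
        (nhds ((1 / R₁) * ((b₁ + e₁ * R₁) * (b₂ + e₂ * R₁)))) := by
    intro i j A b₁ b₂ e₁ e₂ heq
    refine (key A b₁ b₂ e₁ e₂).congr' ?_
    filter_upwards [self_mem_nhdsWithin] with r hr
    exact (heq r hr).symm
  have hsimp : ∀ r ∈ Set.Ioi R₁, r ≠ 0 ∧ r - R₁ ≠ 0 := by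
    intro r hr
    have : R₁ < r := hr
    constructor <;> nlinarith
  have h00 : Filter.Tendsto (fun r => (r - R₁) * C r 0 0) (nhdsWithin R₁ (Set.Ioi R₁))
      (nhds ((1 / R₁) * ((d * c + (-s) * R₁) * (d * c + (-s) * R₁)))) := by
    apply entry 0 0 (c ^ 2) (d * c) (d * c) (-s) (-s)
    intro r hr
    obtain ⟨h1, h2⟩ := hsimp r hr
    rw [hC r hr]
    simp only [Matrix.of_apply, Matrix.cons_val', Matrix.cons_val_zero, Matrix.empty_val',
      Matrix.cons_val_fin_one, Matrix.cons_val_one, Matrix.head_cons, Matrix.head_fin_const]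
    field_simp
    ring
  have h11 : Filter.Tendsto (fun r => (r - R₁) * C r 1 1) (nhdsWithin R₁ (Set.Ioi R₁))
      (nhds ((1 / R₁) * ((d * s + c * R₁) * (d * s + c * R₁)))) := by
    apply entry 1 1 (s ^ 2) (d * s) (d * s) c c
    intro r hr
    obtain ⟨h1, h2⟩ := hsimp r hr
    rw [hC r hr]
    simp only [Matrix.of_apply, Matrix.cons_val', Matrix.cons_val_zero, Matrix.empty_val',
      Matrix.cons_val_fin_one, Matrix.cons_val_one, Matrix.head_cons, Matrix.head_fin_const]
    field_simp
  have h01 : Filter.Tendsto (fun r => (r - R₁) * C r 0 1) (nhdsWithin R₁ (Set.Ioi R₁))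
      (nhds ((1 / R₁) * ((d * c + (-s) * R₁) * (d * s + c * R₁)))) := by
    apply entry 0 1 (c * s) (d * c) (d * s) (-s) c
    intro r hr
    obtain ⟨h1, h2⟩ := hsimp r hr
    rw [hC r hr]
    simp only [Matrix.of_apply, Matrix.cons_val', Matrix.cons_val_zero, Matrix.empty_val',
      Matrix.cons_val_fin_one, Matrix.cons_val_one, Matrix.head_cons, Matrix.head_fin_const]
    field_simp
    ring
  have h10 : Filter.Tendsto (fun r => (r - R₁) * C r 1 0) (nhdsWithin R₁ (Set.Ioi R₁))
      (nhds ((1 / R₁) * ((d * c + (-s) * R₁) * (d * s + c * R₁)))) := by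
    apply entry 1 0 (c * s) (d * c) (d * s) (-s) c
    intro r hr
    obtain ⟨h1, h2⟩ := hsimp r hr
    rw [hC r hr]
    simp only [Matrix.of_apply, Matrix.cons_val', Matrix.cons_val_zero, Matrix.empty_val',
      Matrix.cons_val_fin_one, Matrix.cons_val_one, Matrix.head_cons, Matrix.head_fin_const]
    field_simp
    ring
  constructor
  · refine tendsto_pi_nhds.mpr ?_
    intro i
    refine tendsto_pi_nhds.mpr ?_
    intro j
    fin_cases i <;> fin_cases j <;>
      simp only [Matrix.smul_apply, smul_eq_mul, Matrix.cons_val', Matrix.cons_val_zero,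
        Matrix.empty_val', Matrix.cons_val_fin_one, Matrix.cons_val_one, Matrix.head_cons,
        Matrix.head_fin_const, Fin.isValue, Fin.zero_eta, Fin.mk_one]
    · convert h00 using 2; simp [Matrix.cons_val_zero, Matrix.cons_val_one, Matrix.head_cons]; exact Or.inl (by ring)
    · convert h01 using 2; simp [Matrix.cons_val_zero, Matrix.cons_val_one, Matrix.head_cons]; exact Or.inl (by ring)
    · convert h10 using 2; simp [Matrix.cons_val_zero, Matrix.cons_val_one, Matrix.head_cons]; exact Or.inl (by ring)
    · convert h11 using 2; simp [Matrix.cons_val_zero, Matrix.cons_val_one, Matrix.head_cons]; exact Or.inl (by ring)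
  · have hsum := h00.add h11
    have hsc : s ^ 2 + c ^ 2 = 1 := Real.sin_sq_add_cos_sq θ
    have : (1 / R₁) * ((d * c + (-s) * R₁) * (d * c + (-s) * R₁)) +
        (1 / R₁) * ((d * s + c * R₁) * (d * s + c * R₁)) = (R₁ ^ 2 + d ^ 2) / R₁ := by
      field_simp
      nlinarith [hsc]
    rw [this] at hsum
    refine hsum.congr fun r => ?_
    ring
end

section
/- Let κ ∈ ℝ and (x,y) ∈ ℝ² with x² + y² = r² > 0. Define the matrix C = (1/r²) [[r² + 2κxy + κ²y², -κx² - κ²xy + κy²], [-κx² - κ²xy + κy², r² - 2κxy + κ²x²]]. Then C is symmetric, det C = 1, and C₁₁ + C₂₂ = 2 + κ². In particular C is symmetric positive definite. -/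
/-- the rotator material matrix is symmetric, has `det C = 1` and
trace `2 + κ²`; in particular it is symmetric positive definite. -/
theorem stmt15 (κ x y r : ℝ) (hr : 0 < r) (hxy : x ^ 2 + y ^ 2 = r ^ 2)
    (C : Matrix (Fin 2) (Fin 2) ℝ)
    (hC : C = (r ^ 2)⁻¹ •
      !![r ^ 2 + 2 * κ * x * y + κ ^ 2 * y ^ 2,
         -κ * x ^ 2 - κ ^ 2 * x * y + κ * y ^ 2;
         -κ * x ^ 2 - κ ^ 2 * x * y + κ * y ^ 2,
         r ^ 2 - 2 * κ * x * y + κ ^ 2 * x ^ 2]) :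
    C.IsSymm ∧ C.det = 1 ∧ C 0 0 + C 1 1 = 2 + κ ^ 2 ∧ C.PosDef := by
  have hr2 : (0:ℝ) < r ^ 2 := by positivity
  have hsymm : C.IsSymm := by
    subst hC
    rw [Matrix.IsSymm]
    ext i j
    fin_cases i <;> fin_cases j <;>
      simp [Matrix.transpose_apply]
  refine ⟨hsymm, ?_, ?_, ?_⟩
  · subst hC
    rw [Matrix.det_fin_two]
    simp only [Matrix.smul_apply, Matrix.cons_val', Matrix.cons_val_zero, Matrix.cons_val_one,
      Matrix.head_cons, Matrix.head_fin_const, Matrix.empty_val', Matrix.cons_val_fin_one,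
      smul_eq_mul, Matrix.of_apply]
    field_simp
    rw [← hxy]; linear_combination (x ^ 2 + y ^ 2 + r ^ 2) * hxy
  · subst hC
    simp only [Matrix.smul_apply, Matrix.cons_val', Matrix.cons_val_zero, Matrix.cons_val_one,
      Matrix.head_cons, Matrix.head_fin_const, Matrix.empty_val', Matrix.cons_val_fin_one,
      smul_eq_mul, Matrix.of_apply]
    field_simp
    rw [← hxy]; ring
  · have hherm : C.IsHermitian := by
      rw [Matrix.IsHermitian]
      ext i j
      rw [Matrix.conjTranspose_apply, star_trivial]
      rw [← congrFun (congrFun hsymm i) j, Matrix.transpose_apply]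
    refine Matrix.PosDef.of_dotProduct_mulVec_pos hherm fun v hv => ?_
    have key : dotProduct (star v) (C.mulVec v) =
        (r ^ 2)⁻¹ * (((x * v 0 + y * v 1) + κ * (y * v 0 - x * v 1)) ^ 2
          + (y * v 0 - x * v 1) ^ 2) := by
      subst hC
      simp [Matrix.mulVec, dotProduct, Fin.sum_univ_two]
      rw [← hxy]; ring
    rw [key]
    have hv0 : ¬ (x * v 0 + y * v 1 = 0 ∧ y * v 0 - x * v 1 = 0) := by
      rintro ⟨ha, hb⟩
      apply hv
      ext i
      have h0 : r ^ 2 * v 0 = 0 := by linear_combination x * ha + y * hb - v 0 * hxy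
      have h1 : r ^ 2 * v 1 = 0 := by linear_combination y * ha - x * hb - v 1 * hxy
      fin_cases i
      · simpa using (mul_eq_zero.mp h0).resolve_left (by positivity)
      · simpa using (mul_eq_zero.mp h1).resolve_left (by positivity)
    have : (0:ℝ) < ((x * v 0 + y * v 1) + κ * (y * v 0 - x * v 1)) ^ 2
        + (y * v 0 - x * v 1) ^ 2 := by
      rcases eq_or_ne (y * v 0 - x * v 1) 0 with hb | hb
      · have ha : x * v 0 + y * v 1 ≠ 0 := fun ha => hv0 ⟨ha, hb⟩
        have : (x * v 0 + y * v 1) + κ * (y * v 0 - x * v 1) ≠ 0 := by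
          rw [hb]; simpa using ha
        positivity
      · positivity
    positivity
end

section
/- Let 0 < ϱ < 1, let R₂ > 0 with 0 < ϱR₂ < r, let d ∈ ℝ, and let (x,y) ∈ ℝ² with x² + y² = r². Define the symmetric matrix C by C₁₁ = ((r-ϱR₂)/r)(x²/r²) + (ϱ/(r-ϱR₂))((ϱ/r)d(x²/r²) - 2xy/r²)d + (r/(r-ϱR₂))(y²/r²), C₂₂ = ((r-ϱR₂)/r)(y²/r²) + (ϱ/(r-ϱR₂))((ϱ/r)d(y²/r²) + 2xy/r²)d + (r/(r-ϱR₂))(x²/r²), C₁₂ = ((r-ϱR₂)/r - r/(r-ϱR₂))(xy/r²) + (ϱ/(r-ϱR₂))(x²/r² + (ϱ/r)d(xy/r²) - y²/r²)d. Then det C = 1 and C₁₁ + C₂₂ = (r - ϱR₂)/r + r/(r - ϱR₂) + ϱ²d²/(r(r - ϱR₂)). -/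
/-- the concentrator material matrix in the expanded annulus has
`det C = 1` and trace `(r-ϱR₂)/r + r/(r-ϱR₂) + ϱ²d²/(r(r-ϱR₂))`. -/
theorem stmt16 (ϱ R₂ r d x y : ℝ) (hϱ0 : 0 < ϱ) (hϱ1 : ϱ < 1) (hR₂ : 0 < R₂)
    (h0 : 0 < ϱ * R₂) (hr : ϱ * R₂ < r) (hxy : x ^ 2 + y ^ 2 = r ^ 2)
    (C : Matrix (Fin 2) (Fin 2) ℝ)
    (hC : C =
      !![(r - ϱ * R₂) / r * (x ^ 2 / r ^ 2) +
           ϱ / (r - ϱ * R₂) * (ϱ / r * d * (x ^ 2 / r ^ 2) - 2 * x * y / r ^ 2) * d +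
           r / (r - ϱ * R₂) * (y ^ 2 / r ^ 2),
         ((r - ϱ * R₂) / r - r / (r - ϱ * R₂)) * (x * y / r ^ 2) +
           ϱ / (r - ϱ * R₂) *
             (x ^ 2 / r ^ 2 + ϱ / r * d * (x * y / r ^ 2) - y ^ 2 / r ^ 2) * d;
         ((r - ϱ * R₂) / r - r / (r - ϱ * R₂)) * (x * y / r ^ 2) +
           ϱ / (r - ϱ * R₂) *
             (x ^ 2 / r ^ 2 + ϱ / r * d * (x * y / r ^ 2) - y ^ 2 / r ^ 2) * d,
         (r - ϱ * R₂) / r * (y ^ 2 / r ^ 2) +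
           ϱ / (r - ϱ * R₂) * (ϱ / r * d * (y ^ 2 / r ^ 2) + 2 * x * y / r ^ 2) * d +
           r / (r - ϱ * R₂) * (x ^ 2 / r ^ 2)]) :
    C.det = 1 ∧
    C 0 0 + C 1 1 =
      (r - ϱ * R₂) / r + r / (r - ϱ * R₂) + ϱ ^ 2 * d ^ 2 / (r * (r - ϱ * R₂)) := by
  have hrp : (0:ℝ) < r := h0.trans hr
  have hr0 : r ≠ 0 := hrp.ne'
  have hsp : (0:ℝ) < r - ϱ * R₂ := sub_pos.mpr hr
  have hs : r - ϱ * R₂ ≠ 0 := hsp.ne'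
  have hk : r ^ 3 * (r - ϱ * R₂) ≠ 0 := by positivity
  have hA : (r - ϱ * R₂) / r * (x ^ 2 / r ^ 2) +
      ϱ / (r - ϱ * R₂) * (ϱ / r * d * (x ^ 2 / r ^ 2) - 2 * x * y / r ^ 2) * d +
      r / (r - ϱ * R₂) * (y ^ 2 / r ^ 2) =
      ((r - ϱ * R₂) ^ 2 * x ^ 2 + (ϱ * d * x - r * y) ^ 2) / (r ^ 3 * (r - ϱ * R₂)) := by
    field_simp
    ring
  have hD : (r - ϱ * R₂) / r * (y ^ 2 / r ^ 2) +
      ϱ / (r - ϱ * R₂) * (ϱ / r * d * (y ^ 2 / r ^ 2) + 2 * x * y / r ^ 2) * d +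
      r / (r - ϱ * R₂) * (x ^ 2 / r ^ 2) =
      ((r - ϱ * R₂) ^ 2 * y ^ 2 + (ϱ * d * y + r * x) ^ 2) / (r ^ 3 * (r - ϱ * R₂)) := by
    field_simp
    ring
  have hB : ((r - ϱ * R₂) / r - r / (r - ϱ * R₂)) * (x * y / r ^ 2) +
      ϱ / (r - ϱ * R₂) * (x ^ 2 / r ^ 2 + ϱ / r * d * (x * y / r ^ 2) - y ^ 2 / r ^ 2) * d =
      ((r - ϱ * R₂) ^ 2 * (x * y) + (ϱ * d * x - r * y) * (ϱ * d * y + r * x)) /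
        (r ^ 3 * (r - ϱ * R₂)) := by
    field_simp
    ring
  subst hC
  constructor
  · rw [Matrix.det_fin_two_of, hA, hB, hD, div_mul_div_comm, div_mul_div_comm,
      div_sub_div_same, div_eq_one_iff_eq (by positivity)]
    linear_combination ((r - ϱ * R₂) ^ 2 * r ^ 2 * (x ^ 2 + y ^ 2 + r ^ 2)) * hxy
  · show ((r - ϱ * R₂) / r * (x ^ 2 / r ^ 2) +
      ϱ / (r - ϱ * R₂) * (ϱ / r * d * (x ^ 2 / r ^ 2) - 2 * x * y / r ^ 2) * d +
      r / (r - ϱ * R₂) * (y ^ 2 / r ^ 2)) +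
      ((r - ϱ * R₂) / r * (y ^ 2 / r ^ 2) +
      ϱ / (r - ϱ * R₂) * (ϱ / r * d * (y ^ 2 / r ^ 2) + 2 * x * y / r ^ 2) * d +
      r / (r - ϱ * R₂) * (x ^ 2 / r ^ 2)) = _
    rw [hA, hD, ← add_div]
    have hR : (r - ϱ * R₂) / r + r / (r - ϱ * R₂) + ϱ ^ 2 * d ^ 2 / (r * (r - ϱ * R₂)) =
        ((r - ϱ * R₂) ^ 2 + r ^ 2 + ϱ ^ 2 * d ^ 2) / (r * (r - ϱ * R₂)) := by
      field_simp
    rw [hR, div_eq_div_iff (by positivity) (by positivity)]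
    linear_combination (((r - ϱ * R₂) ^ 2 + r ^ 2 + ϱ ^ 2 * d ^ 2) * (r * (r - ϱ * R₂))) * hxy
end
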